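/- (Farkas' Lemma, inclusion form) Let A ∈ ℝ^{m×n}, b ∈ ℝ^m, c ∈ ℝ^n, d ∈ ℝ. Assume {x | A x ≤ b} is nonempty. Then {x | A x ≤ b} ⊆ {x | cᵀx ≤ d} if and only if there exists y ∈ ℝ^m with y ≥ 0, Aᵀ y = c, and bᵀ y ≤ d. -/

import Mathlib

open Matrix Finset

section Carath

variable {E : Type*} [AddCommGroup E] [Module ℝ E]
variable {ι : Type*} [Fintype ι] [DecidableEq ι]

lemma conic_caratheodory (v : ι → E) :
    ∀ (N : ℕ) (y : ι → ℝ), 0 ≤ y → (univ.filter fun i => y i ≠ 0).card ≤ N →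
    ∃ z : ι → ℝ, 0 ≤ z ∧ ∑ i, z i • v i = ∑ i, y i • v i ∧
      LinearIndependent ℝ (fun i : {i // z i ≠ 0} => v (i : ι)) := by
  intro N
  induction N with
  | zero =>
    intro y hy hcard
    have hy0 : ∀ i, y i = 0 := by
      intro i
      by_contra h
      have : i ∈ univ.filter fun i => y i ≠ 0 := by simp [h]
      have := card_pos.mpr ⟨i, this⟩
      omega
    haveI : IsEmpty {i // y i ≠ 0} := ⟨fun i => i.2 (hy0 i.1)⟩
    exact ⟨y, hy, rfl, linearIndependent_empty_type⟩
  | succ N ih =>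
    intro y hy hcard
    by_cases hli : LinearIndependent ℝ (fun i : {i // y i ≠ 0} => v (i : ι))
    · exact ⟨y, hy, rfl, hli⟩
    · -- get a nontrivial vanishing combination supported on the support of y
      obtain ⟨g, hgsum, i₁, hgi₁⟩ := Fintype.not_linearIndependent_iff.mp hli
      have key : ∃ μ : ι → ℝ, (∑ i, μ i • v i = 0) ∧ (∀ i, μ i ≠ 0 → y i ≠ 0) ∧
          (∃ i, 0 < μ i) := by
        set μ₀ : ι → ℝ := fun i => if h : y i ≠ 0 then g ⟨i, h⟩ else 0 with hμ₀
        have hsup : ∀ i, μ₀ i ≠ 0 → y i ≠ 0 := by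
          intro i hi
          by_contra h
          apply hi
          simp [hμ₀, h]
        have hsum : ∑ i, μ₀ i • v i = 0 := by
          have h1 : ∑ i, μ₀ i • v i = ∑ i ∈ univ.filter (fun i => y i ≠ 0), μ₀ i • v i := by
            refine (Finset.sum_subset (filter_subset _ _) ?_).symm
            intro i _ hi
            simp only [mem_filter, mem_univ, true_and, not_not] at hi
            simp [hμ₀, hi]
          have h2 : ∑ i ∈ univ.filter (fun i => y i ≠ 0), μ₀ i • v i
              = ∑ i : {i // y i ≠ 0}, g i • v (i : ι) := by
            rw [Finset.sum_subtype (p := fun i => y i ≠ 0) (univ.filter fun i => y i ≠ 0)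
              (by intro i; simp) (fun i => μ₀ i • v i)]
            refine Finset.sum_congr rfl fun i _ => ?_
            have : μ₀ (i : ι) = g i := dif_pos i.2
            rw [this]
          rw [h1, h2, hgsum]
        rcases em (∃ i, 0 < μ₀ i) with hpos | hpos
        · exact ⟨μ₀, hsum, hsup, hpos⟩
        · push_neg at hpos
          refine ⟨-μ₀, by simp [hsum], by simpa using hsup, ⟨i₁, ?_⟩⟩
          have h1 : μ₀ i₁ ≠ 0 := by simp [hμ₀, i₁.2, dif_pos]; exact hgi₁
          have := hpos i₁
          simp only [Pi.neg_apply]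
          cases lt_or_eq_of_le this with
          | inl h => linarith
          | inr h => exact absurd h h1
      obtain ⟨μ, hμsum, hμsup, iP, hiP⟩ := key
      set T : Finset ι := univ.filter fun i => 0 < μ i with hT
      have hTne : T.Nonempty := ⟨iP, by simp [hT, hiP]⟩
      set t : ℝ := T.inf' hTne fun i => y i / μ i with ht
      have htnn : 0 ≤ t := by
        apply Finset.le_inf'
        intro i hi
        simp only [hT, mem_filter] at hi
        exact div_nonneg (hy i) (le_of_lt hi.2)
      obtain ⟨i₀, hi₀T, hi₀⟩ := Finset.exists_mem_eq_inf' hTne fun i => y i / μ i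
      have hμi₀ : 0 < μ i₀ := by simpa [hT] using hi₀T
      set z : ι → ℝ := fun i => y i - t * μ i with hz
      have hznn : 0 ≤ z := by
        intro i
        simp only [hz, Pi.zero_apply]
        rcases le_or_gt (μ i) 0 with h | h
        · have hyi : 0 ≤ y i := hy i
          nlinarith [mul_nonpos_of_nonneg_of_nonpos htnn h]
        · have : t ≤ y i / μ i := Finset.inf'_le _ (by simp [hT, h])
          rw [le_div_iff₀ h] at this
          linarith
      have hzsum : ∑ i, z i • v i = ∑ i, y i • v i := by
        simp only [hz, sub_smul, Finset.sum_sub_distrib, mul_smul, ← Finset.smul_sum, hμsum,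
          smul_zero, sub_zero]
      have hzi₀ : z i₀ = 0 := by
        show y i₀ - t * μ i₀ = 0
        rw [ht, hi₀]
        field_simp
        simp
      have hyi₀ : y i₀ ≠ 0 := hμsup i₀ (ne_of_gt hμi₀)
      have hsub : (univ.filter fun i => z i ≠ 0) ⊆ (univ.filter fun i => y i ≠ 0).erase i₀ := by
        intro i hi
        simp only [mem_filter, mem_univ, true_and] at hi
        rw [mem_erase]
        constructor
        · rintro rfl; exact hi hzi₀
        · simp only [mem_filter, mem_univ, true_and]
          intro h
          apply hi
          have : μ i = 0 := by
            by_contra hc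
            exact hμsup i hc h
          show y i - t * μ i = 0
          simp [h, this]
      have hcard' : (univ.filter fun i => z i ≠ 0).card ≤ N := by
        have h1 := Finset.card_le_card hsub
        have h2 : i₀ ∈ univ.filter fun i => y i ≠ 0 := by simp [hyi₀]
        have h3 := Finset.card_erase_of_mem h2
        have h4 := Finset.card_pos.mpr ⟨i₀, h2⟩
        omega
      obtain ⟨z', h1, h2, h3⟩ := ih z hznn hcard'
      exact ⟨z', h1, h2.trans hzsum, h3⟩

end Carath

section Closed

variable {E : Type*} [NormedAddCommGroup E] [InnerProductSpace ℝ E] [FiniteDimensional ℝ E]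
variable {ι : Type*} [Fintype ι] [DecidableEq ι]

/-- The linear map sending coefficients supported on `s` to the combination. -/
noncomputable def comboMap (v : ι → E) (s : Finset ι) : ({a // a ∈ s} → ℝ) →ₗ[ℝ] E where
  toFun y := ∑ i : {a // a ∈ s}, y i • v (i : ι)
  map_add' y₁ y₂ := by simp [add_smul, Finset.sum_add_distrib]
  map_smul' r y := by simp [mul_smul, Finset.smul_sum]

lemma cone_isClosed (v : ι → E) :
    IsClosed {x : E | ∃ y : ι → ℝ, 0 ≤ y ∧ x = ∑ i, y i • v i} := by
  classical
  have key : {x : E | ∃ y : ι → ℝ, 0 ≤ y ∧ x = ∑ i, y i • v i} =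
      ⋃ s : {s : Finset ι // LinearIndependent ℝ (fun i : {a // a ∈ (s : Finset ι)} => v (i : ι))},
        comboMap v (s : Finset ι) '' {y | 0 ≤ y} := by
    ext x
    simp only [Set.mem_setOf_eq, Set.mem_iUnion, Set.mem_image]
    constructor
    · rintro ⟨y, hy, rfl⟩
      obtain ⟨z, hz, hsum, hli⟩ := conic_caratheodory v (univ.filter fun i => y i ≠ 0).card y hy
        le_rfl
      set s : Finset ι := univ.filter fun i => z i ≠ 0 with hs
      have hmem : ∀ i : ι, i ∈ s ↔ z i ≠ 0 := by intro i; simp [hs]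
      have hli' : LinearIndependent ℝ (fun i : {a // a ∈ s} => v (i : ι)) := by
        exact (linearIndependent_equiv' (Equiv.subtypeEquivRight (fun i => by simp [hs]))
          (f := fun i : {i // z i ≠ 0} => v (i : ι)) (by funext i; rfl)).mpr hli
      refine ⟨⟨s, hli'⟩, fun i => z (i : ι), fun i => hz (i : ι), ?_⟩
      show ∑ i : {a // a ∈ s}, z (i : ι) • v (i : ι) = ∑ i, y i • v i
      rw [← hsum, Finset.sum_coe_sort s (fun i => z i • v i)]
      refine Finset.sum_subset (subset_univ s) ?_
      intro i _ hi
      rw [hmem] at hi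
      simp only [not_not] at hi
      simp [hi]
    · rintro ⟨s, y, hy, rfl⟩
      refine ⟨fun i => if h : i ∈ (s : Finset ι) then y ⟨i, h⟩ else 0, ?_, ?_⟩
      · intro i
        by_cases h : i ∈ (s : Finset ι) <;> simp [h]
        · exact hy ⟨i, h⟩
      · show comboMap v (s : Finset ι) y = _
        show (∑ i : {a // a ∈ (s : Finset ι)}, y i • v (i : ι)) = _
        refine Eq.symm ?_
        calc ∑ i : ι, (fun i => if h : i ∈ (s : Finset ι) then y ⟨i, h⟩ else 0) i • v i
            = ∑ i ∈ (s : Finset ι),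
                (if h : i ∈ (s : Finset ι) then y ⟨i, h⟩ else 0) • v i :=
              (Finset.sum_subset (subset_univ _) (fun i _ hi => by simp [hi])).symm
          _ = ∑ i : {a // a ∈ (s : Finset ι)},
                (if h : (i : ι) ∈ (s : Finset ι) then y ⟨i, h⟩ else 0) • v (i : ι) :=
              (Finset.sum_coe_sort _ _).symm
          _ = ∑ i : {a // a ∈ (s : Finset ι)}, y i • v (i : ι) := by
              refine Finset.sum_congr rfl fun i _ => ?_
              rw [dif_pos i.2]
  rw [key]
  refine isClosed_iUnion_of_finite fun s => ?_
  have hinj : Function.Injective (comboMap v (s : Finset ι)) := by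
    rw [← LinearMap.ker_eq_bot, LinearMap.ker_eq_bot']
    intro y hy
    funext i
    exact Fintype.linearIndependent_iff.mp s.2 y hy i
  have hemb := LinearMap.isClosedEmbedding_of_injective (𝕜 := ℝ)
    (f := comboMap v (s : Finset ι)) (by rwa [LinearMap.ker_eq_bot])
  refine hemb.isClosedMap _ ?_
  have : {y : {a // a ∈ (s : Finset ι)} → ℝ | 0 ≤ y} =
      ⋂ i, (fun y : {a // a ∈ (s : Finset ι)} → ℝ => y i) ⁻¹' Set.Ici 0 := by
    ext y; simp [Pi.le_def]
  rw [this]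
  exact isClosed_iInter fun i => IsClosed.preimage (continuous_apply i) isClosed_Ici

end Closed


section Helpers

lemma euc_sum_apply {ι κ : Type*} [Fintype ι] (f : ι → EuclideanSpace ℝ κ) (j : κ) :
    (∑ i, f i) j = ∑ i, f i j := by
  have h := map_sum (WithLp.linearEquiv 2 ℝ (κ → ℝ)) f Finset.univ
  have h2 := congrFun h j
  rw [Finset.sum_apply] at h2
  exact h2

end Helpers

/-- Farkas' Lemma (inclusion form): a nonempty polyhedron {x | A x ≤ b} is
contained in the half-space {x | cᵀx ≤ d} iff there is y ≥ 0 with Aᵀy = c and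
bᵀy ≤ d. -/
theorem stmt4 {m n : ℕ} (A : Matrix (Fin m) (Fin n) ℝ) (b : Fin m → ℝ)
    (c : Fin n → ℝ) (d : ℝ)
    (hne : ∃ x : Fin n → ℝ, A.mulVec x ≤ b) :
    {x : Fin n → ℝ | A.mulVec x ≤ b} ⊆ {x : Fin n → ℝ | c ⬝ᵥ x ≤ d} ↔
      ∃ y : Fin m → ℝ, 0 ≤ y ∧ Aᵀ.mulVec y = c ∧ b ⬝ᵥ y ≤ d := by
  classical
  set emb : (Fin (n + 1) → ℝ) → EuclideanSpace ℝ (Fin (n + 1)) :=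
    ⇑(WithLp.equiv 2 (Fin (n + 1) → ℝ)).symm with hemb
  set v : (Fin m ⊕ Unit) → EuclideanSpace ℝ (Fin (n + 1)) := fun i =>
    Sum.elim (fun i => emb (Fin.snoc (fun j => A i j) (b i))) (fun _ => emb (Fin.snoc 0 1)) i
    with hv
  set S : Set (EuclideanSpace ℝ (Fin (n + 1))) :=
    {x | ∃ y : Fin m ⊕ Unit → ℝ, 0 ≤ y ∧ x = ∑ i, y i • v i} with hS
  have happ : ∀ (y : Fin m ⊕ Unit → ℝ) (j : Fin (n + 1)),
      (∑ i, y i • v i) j = ∑ i, y i * v i j := by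
    intro y j
    rw [euc_sum_apply]
    refine Finset.sum_congr rfl fun i _ => ?_
    rfl
  have hv_cast : ∀ (i : Fin m) (j : Fin n), v (Sum.inl i) (Fin.castSucc j) = A i j := by
    intro i j
    show (Fin.snoc (fun j => A i j) (b i) : Fin (n+1) → ℝ) (Fin.castSucc j) = A i j
    simp
  have hv_last : ∀ i : Fin m, v (Sum.inl i) (Fin.last n) = b i := by
    intro i
    show (Fin.snoc (fun j => A i j) (b i) : Fin (n+1) → ℝ) (Fin.last n) = b i
    simp
  have hu_cast : ∀ j : Fin n, v (Sum.inr ()) (Fin.castSucc j) = 0 := by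
    intro j
    show (Fin.snoc (0 : Fin n → ℝ) 1 : Fin (n+1) → ℝ) (Fin.castSucc j) = 0
    simp
  have hu_last : v (Sum.inr ()) (Fin.last n) = 1 := by
    show (Fin.snoc (0 : Fin n → ℝ) 1 : Fin (n+1) → ℝ) (Fin.last n) = 1
    simp
  have hw_cast : ∀ j : Fin n, emb (Fin.snoc c d) (Fin.castSucc j) = c j := by
    intro j; show (Fin.snoc c d : Fin (n+1) → ℝ) (Fin.castSucc j) = c j; simp
  have hw_last : emb (Fin.snoc c d) (Fin.last n) = d := by
    show (Fin.snoc c d : Fin (n+1) → ℝ) (Fin.last n) = d; simp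
  -- membership in the cone is equivalent to the Farkas certificate
  have hmem_iff : emb (Fin.snoc c d) ∈ S ↔
      ∃ y : Fin m → ℝ, 0 ≤ y ∧ Aᵀ.mulVec y = c ∧ b ⬝ᵥ y ≤ d := by
    constructor
    · rintro ⟨y, hy, hxy⟩
      refine ⟨fun i => y (Sum.inl i), fun i => hy (Sum.inl i), ?_, ?_⟩
      · funext j
        have h1 := congrFun (congrArg WithLp.ofLp hxy) (Fin.castSucc j)
        rw [happ] at h1
        rw [Fintype.sum_sum_type] at h1
        simp only [hv_cast, hu_cast, mul_zero, Finset.sum_const, smul_eq_mul] at h1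
        rw [hw_cast] at h1
        rw [Matrix.mulVec, dotProduct]
        simp only [Matrix.transpose_apply]
        rw [h1]
        simp [mul_comm]
      · have h1 := congrFun (congrArg WithLp.ofLp hxy) (Fin.last n)
        rw [happ] at h1
        rw [Fintype.sum_sum_type] at h1
        simp only [hv_last, hu_last, mul_one] at h1
        rw [hw_last] at h1
        have hynn := hy (Sum.inr ())
        rw [dotProduct]
        simp only [Pi.zero_apply] at hynn
        calc ∑ i, b i * y (Sum.inl i) = ∑ i, y (Sum.inl i) * b i := by
              exact Finset.sum_congr rfl fun i _ => mul_comm _ _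
          _ ≤ d := by
              rw [h1]
              simp only [Finset.univ_unique, Finset.sum_singleton]
              linarith
    · rintro ⟨y, hy, hAty, hbyd⟩
      refine ⟨Sum.elim y (fun _ => d - b ⬝ᵥ y), ?_, ?_⟩
      · rintro (i | i)
        · exact hy i
        · simp only [Sum.elim_inr, Pi.zero_apply]
          linarith
      · ext j
        rw [happ, Fintype.sum_sum_type]
        induction j using Fin.lastCases with
        | last =>
          rw [hw_last]
          simp only [hv_last, hu_last, mul_one, Sum.elim_inl, Sum.elim_inr]
          rw [dotProduct]
          have : ∑ i, y i * b i = ∑ i, b i * y i :=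
            Finset.sum_congr rfl fun i _ => mul_comm _ _
          simp only [Finset.univ_unique, Finset.sum_singleton]
          rw [this]
          ring
        | cast j =>
          rw [hw_cast]
          simp only [hv_cast, hu_cast, mul_zero, Sum.elim_inl, Sum.elim_inr]
          have hcj := congrFun hAty j
          rw [Matrix.mulVec, dotProduct] at hcj
          simp only [Matrix.transpose_apply] at hcj
          rw [← hcj]
          simp only [Finset.univ_unique, Finset.sum_singleton, Finset.sum_const]
          rw [Finset.sum_congr rfl fun i _ => mul_comm (y i) (A i j)]
          ring
  constructor
  · -- hard direction
    intro hsub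
    rw [← hmem_iff]
    by_contra hnot
    -- the cone S as a ConvexCone
    have hclosed : IsClosed S := cone_isClosed v
    have hzero : (0 : EuclideanSpace ℝ (Fin (n+1))) ∈ S := by
      exact ⟨0, le_rfl, by simp⟩
    set K : ConvexCone ℝ (EuclideanSpace ℝ (Fin (n+1))) :=
      { carrier := S
        smul_mem' := by
          rintro r hr x ⟨y, hy, rfl⟩
          refine ⟨fun i => r * y i, fun i => mul_nonneg hr.le (hy i), ?_⟩
          rw [Finset.smul_sum]
          refine Finset.sum_congr rfl fun i _ => ?_
          rw [smul_smul]
        add_mem' := by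
          rintro x ⟨y₁, hy₁, rfl⟩ x' ⟨y₂, hy₂, rfl⟩
          exact ⟨fun i => y₁ i + y₂ i, fun i => add_nonneg (hy₁ i) (hy₂ i), by
            rw [← Finset.sum_add_distrib]
            exact Finset.sum_congr rfl fun i _ => (add_smul (y₁ i) (y₂ i) (v i)).symm⟩ }
      with hK
    obtain ⟨y₀, hy₀, hy₀w⟩ :=
      ProperCone.hyperplane_separation' (x₀ := emb (Fin.snoc c d))
        ({ carrier := S
           add_mem' := fun hx hy => K.add_mem' hx hy
           zero_mem' := hzero
           smul_mem' := by
             rintro r x ⟨y, hy, rfl⟩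
             refine ⟨fun i => (r : ℝ) * y i, fun i => mul_nonneg r.2 (hy i), ?_⟩
             show (r : ℝ) • (∑ i, y i • v i : EuclideanSpace ℝ (Fin (n+1))) = _
             rw [Finset.smul_sum]
             simp only [smul_smul]
           isClosed' := hclosed } : ProperCone ℝ (EuclideanSpace ℝ (Fin (n+1)))) hnot
    have hvmem : ∀ i, v i ∈ S := by
      intro i
      refine ⟨fun i' => if i' = i then 1 else 0, ?_, ?_⟩
      · intro i'
        dsimp only [Pi.zero_apply]
        split <;> norm_num
      · rw [Finset.sum_congr rfl fun i' _ => ite_smul _ _ _ _]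
        simp
    have h₁ : ∀ i, 0 ≤ ∑ j, v i j * y₀ j := by
      intro i
      have := hy₀ (v i) (hvmem i)
      rw [PiLp.inner_apply] at this
      exact this.trans_eq (Finset.sum_congr rfl fun j _ => mul_comm (y₀ j) (v i j))
    have h₂ : ∑ j, y₀ j * emb (Fin.snoc c d) j < 0 := by
      have := hy₀w
      rwa [PiLp.inner_apply] at this
    set xx : Fin n → ℝ := fun j => y₀ (Fin.castSucc j) with hxx
    set sl : ℝ := y₀ (Fin.last n) with hsl
    have hrow : ∀ i, 0 ≤ A.mulVec xx i + b i * sl := by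
      intro i
      have h := h₁ (Sum.inl i)
      rw [Fin.sum_univ_castSucc] at h
      simp only [hv_cast, hv_last] at h
      rw [Matrix.mulVec, dotProduct]
      exact h
    have hsl0 : 0 ≤ sl := by
      have h := h₁ (Sum.inr ())
      rw [Fin.sum_univ_castSucc] at h
      simp only [hu_cast, hu_last, zero_mul, one_mul, Finset.sum_const_zero, zero_add] at h
      exact h
    have hcd : (c ⬝ᵥ xx) + d * sl < 0 := by
      rw [Fin.sum_univ_castSucc] at h₂
      simp only [hw_cast, hw_last] at h₂
      rw [dotProduct]
      calc ∑ j, c j * xx j + d * sl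
          = ∑ j, xx j * c j + sl * d := by
            rw [Finset.sum_congr rfl fun j _ => mul_comm (c j) (xx j)]; ring
        _ < 0 := h₂
    rcases eq_or_lt_of_le hsl0 with hsl_eq | hsl_pos
    · -- slack zero: unbounded direction
      obtain ⟨x₀, hx₀⟩ := hne
      have hcx : c ⬝ᵥ xx < 0 := by rw [← hsl_eq] at hcd; linarith
      set t : ℝ := max 0 ((d + 1 - c ⬝ᵥ x₀) / (-(c ⬝ᵥ xx))) with hts
      have ht0 : 0 ≤ t := le_max_left _ _
      have hfeas : A.mulVec (x₀ - t • xx) ≤ b := by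
        intro i
        rw [Matrix.mulVec_sub, Matrix.mulVec_smul]
        have h := hrow i
        rw [← hsl_eq] at h
        have h2 : 0 ≤ A.mulVec xx i := by linarith
        have := hx₀ i
        simp only [Pi.sub_apply, Pi.smul_apply, smul_eq_mul]
        nlinarith
      have hge : d < c ⬝ᵥ (x₀ - t • xx) := by
        rw [dotProduct_sub, dotProduct_smul]
        have ht1 : (d + 1 - c ⬝ᵥ x₀) / (-(c ⬝ᵥ xx)) ≤ t := le_max_right _ _
        have hpos : 0 < -(c ⬝ᵥ xx) := by linarith
        rw [div_le_iff₀ hpos] at ht1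
        simp only [smul_eq_mul]
        nlinarith
      exact absurd (hsub hfeas) (not_le.mpr hge)
    · -- slack positive: rescale
      set x' : Fin n → ℝ := (-(1 / sl)) • xx with hx'
      have hfeas : A.mulVec x' ≤ b := by
        intro i
        rw [hx', Matrix.mulVec_smul]
        have h := hrow i
        simp only [Pi.smul_apply, smul_eq_mul]
        rw [neg_mul, neg_le, one_div_mul_eq_div, le_div_iff₀ hsl_pos]
        linarith
      have hge : d < c ⬝ᵥ x' := by
        rw [hx', dotProduct_smul]
        simp only [smul_eq_mul]
        rw [neg_mul, lt_neg, one_div_mul_eq_div, div_lt_iff₀ hsl_pos]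
        linarith
      exact absurd (hsub hfeas) (not_le.mpr hge)
  · -- easy direction
    rintro ⟨y, hy, hAty, hbyd⟩ x hx
    have h1 : c ⬝ᵥ x = y ⬝ᵥ A.mulVec x := by
      rw [← hAty, Matrix.mulVec_transpose, Matrix.dotProduct_mulVec]
    have h2 : y ⬝ᵥ A.mulVec x ≤ y ⬝ᵥ b := by
      refine Finset.sum_le_sum fun i _ => ?_
      exact mul_le_mul_of_nonneg_left (hx i) (hy i)
    have h3 : y ⬝ᵥ b = b ⬝ᵥ y := dotProduct_comm _ _
    show c ⬝ᵥ x ≤ d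
    rw [h1]
    rw [h3] at h2
    linarith
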